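/- arXiv:1103.4048 — 4 statements merged into one kernel-verified Lean document; each statement's English description precedes it below -/
import Mathlib

section
/- The polynomial F(w¹,w²,w³) = w¹(w¹w²/8 + (w³)²/4) + (w²)⁵/3840 + (w²)²(w³)²/32 satisfies the WDVV associativity equations on ℝ³ with constant metric η given by η₁₂ = η₂₁ = 1/4, η₃₃ = 1/2 and all other entries zero: for all α,β one has ∂₁∂_α∂_β F = η_{αβ}, the matrix η is invertible, and the structure constants c^γ_{αβ} = Σ_ε (η⁻¹)^{γε} ∂_ε∂_α∂_β F satisfy Σ_ε c^ε_{αβ} c^σ_{εγ} = Σ_ε c^ε_{αγ} c^σ_{εβ} for all α,β,γ,σ at every point of ℝ³. -/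
/-- Partial derivative of `f : (Fin N → ℝ) → ℝ` in the `i`-th coordinate direction. -/
noncomputable def pd {N : ℕ} (i : Fin N) (f : (Fin N → ℝ) → ℝ) : (Fin N → ℝ) → ℝ :=
  fun x => fderiv ℝ f x (Pi.single i 1)

/-- The potential. -/
noncomputable def FF : (Fin 3 → ℝ) → ℝ :=
  fun w => w 0 * (w 0 * w 1 / 8 + (w 2) ^ 2 / 4) + (w 1) ^ 5 / 3840 + (w 1) ^ 2 * (w 2) ^ 2 / 32

/-- The constant metric. -/
noncomputable def eta : Matrix (Fin 3) (Fin 3) ℝ :=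
  !![0, 1/4, 0; 1/4, 0, 0; 0, 0, 1/2]

/-- Third partial derivatives `c_(αβγ) = ∂_α ∂_β ∂_γ F`. -/
noncomputable def c3 (α β γ : Fin 3) (x : Fin 3 → ℝ) : ℝ :=
  pd α (pd β (pd γ FF)) x

/-- Structure constants `c^γ_(αβ) = Σ_ε (η⁻¹)^(γε) c_(εαβ)`. -/
noncomputable def cUp (γ α β : Fin 3) (x : Fin 3 → ℝ) : ℝ :=
  ∑ ε, eta⁻¹ γ ε * c3 ε α β x

/- ### Auxiliary machinery -/

noncomputable def Lproj (i : Fin 3) : (Fin 3 → ℝ) →L[ℝ] ℝ := ContinuousLinearMap.proj i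

@[simp] lemma Lproj_apply (i : Fin 3) (x : Fin 3 → ℝ) : Lproj i x = x i := rfl

lemma hproj (i : Fin 3) (x : Fin 3 → ℝ) :
    HasFDerivAt (fun w : Fin 3 → ℝ => w i) (Lproj i) x :=
  (Lproj i).hasFDerivAt

lemma pdFF0 : pd 0 FF = fun x => x 0 * x 1 / 4 + x 2 ^ 2 / 4 := by
  funext x
  have h := (((((hproj 0 x).mul (hproj 0 x)).mul (hproj 1 x)).mul_const (1/8 : ℝ)).add
      (((hproj 0 x).mul ((hproj 2 x).mul (hproj 2 x))).mul_const (1/4 : ℝ))).add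
      ((((((hproj 1 x).mul (hproj 1 x)).mul (hproj 1 x)).mul (hproj 1 x)).mul
        (hproj 1 x)).mul_const (1/3840 : ℝ)) |>.add
      ((((hproj 1 x).mul (hproj 1 x)).mul ((hproj 2 x).mul (hproj 2 x))).mul_const (1/32 : ℝ))
  simp only [pd]
  rw [show FF = fun w : Fin 3 → ℝ => w 0 * w 0 * w 1 * (1/8) + w 0 * (w 2 * w 2) * (1/4)
      + w 1 * w 1 * w 1 * w 1 * w 1 * (1/3840) + w 1 * w 1 * (w 2 * w 2) * (1/32) from by
    funext w; simp only [FF]; ring]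
  erw [h.fderiv]
  simp [Pi.single_apply]
  ring

lemma pdFF1 : pd 1 FF = fun x => x 0 ^ 2 / 8 + x 1 ^ 4 / 768 + x 1 * x 2 ^ 2 / 16 := by
  funext x
  have h := (((((hproj 0 x).mul (hproj 0 x)).mul (hproj 1 x)).mul_const (1/8 : ℝ)).add
      (((hproj 0 x).mul ((hproj 2 x).mul (hproj 2 x))).mul_const (1/4 : ℝ))).add
      ((((((hproj 1 x).mul (hproj 1 x)).mul (hproj 1 x)).mul (hproj 1 x)).mul
        (hproj 1 x)).mul_const (1/3840 : ℝ)) |>.add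
      ((((hproj 1 x).mul (hproj 1 x)).mul ((hproj 2 x).mul (hproj 2 x))).mul_const (1/32 : ℝ))
  simp only [pd]
  rw [show FF = fun w : Fin 3 → ℝ => w 0 * w 0 * w 1 * (1/8) + w 0 * (w 2 * w 2) * (1/4)
      + w 1 * w 1 * w 1 * w 1 * w 1 * (1/3840) + w 1 * w 1 * (w 2 * w 2) * (1/32) from by
    funext w; simp only [FF]; ring]
  erw [h.fderiv]
  simp [Pi.single_apply]
  ring

lemma pdFF2 : pd 2 FF = fun x => x 0 * x 2 / 2 + x 1 ^ 2 * x 2 / 16 := by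
  funext x
  have h := (((((hproj 0 x).mul (hproj 0 x)).mul (hproj 1 x)).mul_const (1/8 : ℝ)).add
      (((hproj 0 x).mul ((hproj 2 x).mul (hproj 2 x))).mul_const (1/4 : ℝ))).add
      ((((((hproj 1 x).mul (hproj 1 x)).mul (hproj 1 x)).mul (hproj 1 x)).mul
        (hproj 1 x)).mul_const (1/3840 : ℝ)) |>.add
      ((((hproj 1 x).mul (hproj 1 x)).mul ((hproj 2 x).mul (hproj 2 x))).mul_const (1/32 : ℝ))
  simp only [pd]
  rw [show FF = fun w : Fin 3 → ℝ => w 0 * w 0 * w 1 * (1/8) + w 0 * (w 2 * w 2) * (1/4)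
      + w 1 * w 1 * w 1 * w 1 * w 1 * (1/3840) + w 1 * w 1 * (w 2 * w 2) * (1/32) from by
    funext w; simp only [FF]; ring]
  erw [h.fderiv]
  simp [Pi.single_apply]
  ring

/- second derivatives -/

lemma pdg0 (i : Fin 3) : pd i (fun x : Fin 3 → ℝ => x 0 * x 1 / 4 + x 2 ^ 2 / 4)
    = fun x => ![x 1 / 4, x 0 / 4, x 2 / 2] i := by
  funext x
  have h := (((hproj 0 x).mul (hproj 1 x)).mul_const (1/4 : ℝ)).add
      (((hproj 2 x).mul (hproj 2 x)).mul_const (1/4 : ℝ))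
  simp only [pd]
  rw [show (fun x : Fin 3 → ℝ => x 0 * x 1 / 4 + x 2 ^ 2 / 4)
      = fun x : Fin 3 → ℝ => x 0 * x 1 * (1/4) + x 2 * x 2 * (1/4) from by funext w; ring]
  erw [h.fderiv]
  fin_cases i <;> simp [Pi.single_apply] <;> ring

lemma pdg1 (i : Fin 3) : pd i (fun x : Fin 3 → ℝ => x 0 ^ 2 / 8 + x 1 ^ 4 / 768 + x 1 * x 2 ^ 2 / 16)
    = fun x => ![x 0 / 4, x 1 ^ 3 / 192 + x 2 ^ 2 / 16, x 1 * x 2 / 8] i := by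
  funext x
  have h := ((((hproj 0 x).mul (hproj 0 x)).mul_const (1/8 : ℝ)).add
      (((((hproj 1 x).mul (hproj 1 x)).mul (hproj 1 x)).mul (hproj 1 x)).mul_const (1/768 : ℝ))).add
      (((hproj 1 x).mul ((hproj 2 x).mul (hproj 2 x))).mul_const (1/16 : ℝ))
  simp only [pd]
  rw [show (fun x : Fin 3 → ℝ => x 0 ^ 2 / 8 + x 1 ^ 4 / 768 + x 1 * x 2 ^ 2 / 16)
      = fun x : Fin 3 → ℝ => x 0 * x 0 * (1/8) + x 1 * x 1 * x 1 * x 1 * (1/768)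
        + x 1 * (x 2 * x 2) * (1/16) from by funext w; ring]
  erw [h.fderiv]
  fin_cases i <;> simp [Pi.single_apply] <;> ring

lemma pdg2 (i : Fin 3) : pd i (fun x : Fin 3 → ℝ => x 0 * x 2 / 2 + x 1 ^ 2 * x 2 / 16)
    = fun x => ![x 2 / 2, x 1 * x 2 / 8, x 0 / 2 + x 1 ^ 2 / 16] i := by
  funext x
  have h := (((hproj 0 x).mul (hproj 2 x)).mul_const (1/2 : ℝ)).add
      ((((hproj 1 x).mul (hproj 1 x)).mul (hproj 2 x)).mul_const (1/16 : ℝ))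
  simp only [pd]
  rw [show (fun x : Fin 3 → ℝ => x 0 * x 2 / 2 + x 1 ^ 2 * x 2 / 16)
      = fun x : Fin 3 → ℝ => x 0 * x 2 * (1/2) + x 1 * x 1 * x 2 * (1/16) from by funext w; ring]
  erw [h.fderiv]
  fin_cases i <;> simp [Pi.single_apply] <;> ring

/- third derivatives -/

lemma pdA (i : Fin 3) : pd i (fun x : Fin 3 → ℝ => x 1 / 4)
    = fun _ => ![(0:ℝ), 1/4, 0] i := by
  funext x
  have h := (hproj 1 x).mul_const (1/4 : ℝ)
  simp only [pd]
  rw [show (fun x : Fin 3 → ℝ => x 1 / 4) = fun x : Fin 3 → ℝ => x 1 * (1/4) from by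
    funext w; ring]
  erw [h.fderiv]
  fin_cases i <;> simp [Pi.single_apply]

lemma pdB (i : Fin 3) : pd i (fun x : Fin 3 → ℝ => x 0 / 4)
    = fun _ => ![(1/4:ℝ), 0, 0] i := by
  funext x
  have h := (hproj 0 x).mul_const (1/4 : ℝ)
  simp only [pd]
  rw [show (fun x : Fin 3 → ℝ => x 0 / 4) = fun x : Fin 3 → ℝ => x 0 * (1/4) from by
    funext w; ring]
  erw [h.fderiv]
  fin_cases i <;> simp [Pi.single_apply]

lemma pdC (i : Fin 3) : pd i (fun x : Fin 3 → ℝ => x 2 / 2)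
    = fun _ => ![(0:ℝ), 0, 1/2] i := by
  funext x
  have h := (hproj 2 x).mul_const (1/2 : ℝ)
  simp only [pd]
  rw [show (fun x : Fin 3 → ℝ => x 2 / 2) = fun x : Fin 3 → ℝ => x 2 * (1/2) from by
    funext w; ring]
  erw [h.fderiv]
  fin_cases i <;> simp [Pi.single_apply]

lemma pdD (i : Fin 3) : pd i (fun x : Fin 3 → ℝ => x 1 ^ 3 / 192 + x 2 ^ 2 / 16)
    = fun x => ![(0:ℝ), x 1 ^ 2 / 64, x 2 / 8] i := by
  funext x
  have h := ((((hproj 1 x).mul (hproj 1 x)).mul (hproj 1 x)).mul_const (1/192 : ℝ)).add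
      (((hproj 2 x).mul (hproj 2 x)).mul_const (1/16 : ℝ))
  simp only [pd]
  rw [show (fun x : Fin 3 → ℝ => x 1 ^ 3 / 192 + x 2 ^ 2 / 16)
      = fun x : Fin 3 → ℝ => x 1 * x 1 * x 1 * (1/192) + x 2 * x 2 * (1/16) from by
    funext w; ring]
  erw [h.fderiv]
  fin_cases i <;> simp [Pi.single_apply] <;> ring

lemma pdE (i : Fin 3) : pd i (fun x : Fin 3 → ℝ => x 1 * x 2 / 8)
    = fun x => ![(0:ℝ), x 2 / 8, x 1 / 8] i := by
  funext x
  have h := ((hproj 1 x).mul (hproj 2 x)).mul_const (1/8 : ℝ)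
  simp only [pd]
  rw [show (fun x : Fin 3 → ℝ => x 1 * x 2 / 8) = fun x : Fin 3 → ℝ => x 1 * x 2 * (1/8) from by
    funext w; ring]
  erw [h.fderiv]
  fin_cases i <;> simp [Pi.single_apply] <;> ring

lemma pdF (i : Fin 3) : pd i (fun x : Fin 3 → ℝ => x 0 / 2 + x 1 ^ 2 / 16)
    = fun x => ![(1/2:ℝ), x 1 / 8, 0] i := by
  funext x
  have h := ((hproj 0 x).mul_const (1/2 : ℝ)).add
      (((hproj 1 x).mul (hproj 1 x)).mul_const (1/16 : ℝ))
  simp only [pd]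
  rw [show (fun x : Fin 3 → ℝ => x 0 / 2 + x 1 ^ 2 / 16)
      = fun x : Fin 3 → ℝ => x 0 * (1/2) + x 1 * x 1 * (1/16) from by funext w; ring]
  erw [h.fderiv]
  fin_cases i <;> simp [Pi.single_apply] <;> ring

/-- closed form of the third derivatives -/
noncomputable def CC (α β γ : Fin 3) (x : Fin 3 → ℝ) : ℝ :=
  ![![![0, 1/4, 0], ![1/4, 0, 0], ![0, 0, 1/2]],
    ![![1/4, 0, 0], ![0, x 1 ^ 2 / 64, x 2 / 8], ![0, x 2 / 8, x 1 / 8]],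
    ![![0, 0, 1/2], ![0, x 2 / 8, x 1 / 8], ![1/2, x 1 / 8, 0]]] α β γ

lemma c3_eq (α β γ : Fin 3) (x : Fin 3 → ℝ) : c3 α β γ x = CC α β γ x := by
  fin_cases β <;> fin_cases γ <;>
    simp only [c3, Fin.zero_eta, Fin.mk_one, Fin.reduceFinMk, Fin.isValue,
      pdFF0, pdFF1, pdFF2] <;>
    simp only [pdg0, pdg1, pdg2, Matrix.cons_val_zero, Matrix.cons_val_one, Matrix.head_cons,
      Matrix.cons_val_two, Matrix.tail_cons, Fin.isValue] <;>
    simp only [pdA, pdB, pdC, pdD, pdE, pdF] <;>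
    fin_cases α <;>
    simp [CC, Matrix.vecHead, Matrix.vecTail] <;> norm_num


lemma eta_inv : eta⁻¹ = !![0, 4, 0; 4, 0, 0; 0, 0, 2] := by
  apply Matrix.inv_eq_right_inv
  ext i j
  fin_cases i <;> fin_cases j <;>
    simp [eta, Matrix.mul_apply, Fin.sum_univ_three, Matrix.one_apply, Matrix.vecHead, Matrix.vecTail] <;> norm_num

/-- closed form of the structure constants -/
noncomputable def UP (γ α β : Fin 3) (x : Fin 3 → ℝ) : ℝ :=
  ![![![1, 0, 0], ![0, x 1 ^ 2 / 16, x 2 / 2], ![0, x 2 / 2, x 1 / 2]],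
    ![![0, 1, 0], ![1, 0, 0], ![0, 0, 2]],
    ![![0, 0, 1], ![0, x 2 / 4, x 1 / 4], ![1, x 1 / 4, 0]]] γ α β

lemma cUp_eq (γ α β : Fin 3) (x : Fin 3 → ℝ) : cUp γ α β x = UP γ α β x := by
  fin_cases γ <;> fin_cases α <;> fin_cases β <;>
    simp [cUp, Fin.sum_univ_three, eta_inv, c3_eq, CC, UP,
      Matrix.vecHead, Matrix.vecTail] <;> ring

set_option maxHeartbeats 2000000 in
theorem stmt_1 :
    (∀ (α β : Fin 3) (x : Fin 3 → ℝ), c3 0 α β x = eta α β) ∧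
    IsUnit eta.det ∧
    (∀ (α β γ σ : Fin 3) (x : Fin 3 → ℝ), 
      ∑ ε, cUp ε α β x * cUp σ ε γ x = ∑ ε, cUp ε α γ x * cUp σ ε β x) := by
  refine ⟨?_, ?_, ?_⟩
  · intro α β x
    fin_cases α <;> fin_cases β <;>
      simp [c3_eq, CC, eta, Matrix.vecHead, Matrix.vecTail] <;> norm_num
  · have h : eta.det = -(1/32 : ℝ) := by
      simp [eta, Matrix.det_fin_three]; norm_num
    rw [h]; norm_num
  · intro α β γ σ x
    simp only [Fin.sum_univ_three, cUp_eq]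
    fin_cases α <;> fin_cases β <;> fin_cases γ <;> fin_cases σ <;>
      simp [UP, Matrix.vecHead, Matrix.vecTail] <;> ring
end

section
/- Let p₁, p₂, p₃, a₁, a₂, a₃ ∈ ℂ with p₁², p₂², p₃² pairwise distinct, and let * be any ℂ-bilinear product on ℂ³ whose values on distinct standard basis vectors are e_i * e_j = (a_j/(p_j² − p_i²))·e_i + (a_i/(p_i² − p_j²))·e_j for all i ≠ j. Then (e₁ * e₂) * e₃ = e₁ * (e₂ * e₃). -/
theorem stmt_12 (p a : Fin 3 → ℂ)
    (hp : ∀ i j : Fin 3, i ≠ j → p i ^ 2 ≠ p j ^ 2)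
    (mul : (Fin 3 → ℂ) →ₗ[ℂ] (Fin 3 → ℂ) →ₗ[ℂ] (Fin 3 → ℂ))
    (e : Fin 3 → Fin 3 → ℂ) (he : ∀ i, e i = Pi.single i 1)
    (hmul : ∀ i j : Fin 3, i ≠ j →
      mul (e i) (e j) =
        (a j / (p j ^ 2 - p i ^ 2)) • e i + (a i / (p i ^ 2 - p j ^ 2)) • e j) :
    mul (mul (e 0) (e 1)) (e 2) = mul (e 0) (mul (e 1) (e 2)) := by
  have h01 := hmul 0 1 (by decide)
  have h02 := hmul 0 2 (by decide)
  have h12 := hmul 1 2 (by decide)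
  have d01 : p 0 ^ 2 - p 1 ^ 2 ≠ 0 := sub_ne_zero.mpr (hp 0 1 (by decide))
  have d02 : p 0 ^ 2 - p 2 ^ 2 ≠ 0 := sub_ne_zero.mpr (hp 0 2 (by decide))
  have d12 : p 1 ^ 2 - p 2 ^ 2 ≠ 0 := sub_ne_zero.mpr (hp 1 2 (by decide))
  have d10 : p 1 ^ 2 - p 0 ^ 2 ≠ 0 := sub_ne_zero.mpr (hp 1 0 (by decide))
  have d20 : p 2 ^ 2 - p 0 ^ 2 ≠ 0 := sub_ne_zero.mpr (hp 2 0 (by decide))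
  have d21 : p 2 ^ 2 - p 1 ^ 2 ≠ 0 := sub_ne_zero.mpr (hp 2 1 (by decide))
  rw [h01, h12, map_add, map_add, map_smul, map_smul, LinearMap.add_apply,
    LinearMap.smul_apply, LinearMap.smul_apply, map_smul, map_smul,
    h02, h12, h01]
  match_scalars <;> field_simp <;> ring
end

section
/- Let k ≥ 1 and p₁,…,p_k, a₁,…,a_k ∈ ℂ with p₁²,…,p_k² pairwise distinct, and let * be any ℂ-bilinear product on ℂ^k whose values on distinct standard basis vectors are e_i * e_j = (a_j/(p_j² − p_i²))·e_i + (a_i/(p_i² − p_j²))·e_j for all i ≠ j. Then the left-nested product (…((e₁ * e₂) * e₃) … ) * e_k equals Σ_{i=1}^{k} ( Π_{j≠i} a_j/(p_j² − p_i²) )·e_i. -/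
lemma key_pf {ι : Type*} [DecidableEq ι] (x a : ι → ℂ) :
    ∀ (S : Finset ι), (∀ i ∈ S, ∀ j ∈ S, i ≠ j → x i ≠ x j) →
    ∀ y : ℂ, (∀ j ∈ S, x j ≠ y) → S.Nonempty →
    ∑ i ∈ S, (a i * (x i - y)⁻¹) * ∏ j ∈ S.erase i, (a j * (x j - x i)⁻¹)
      = ∏ j ∈ S, (a j * (x j - y)⁻¹) := by
  intro S
  induction S using Finset.induction_on with
  | empty => intro _ _ _ h; exact absurd h (by simp)
  | @insert m S hm ih =>
    intro hinj y hy _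
    rcases S.eq_empty_or_nonempty with rfl | hS
    · simp
    · have hmy : x m - y ≠ 0 := sub_ne_zero.mpr (hy m (Finset.mem_insert_self m S))
      have hinj' : ∀ i ∈ S, ∀ j ∈ S, i ≠ j → x i ≠ x j := fun i hi j hj hij =>
        hinj i (Finset.mem_insert_of_mem hi) j (Finset.mem_insert_of_mem hj) hij
      have hy' : ∀ j ∈ S, x j ≠ y := fun j hj => hy j (Finset.mem_insert_of_mem hj)
      have hym : ∀ j ∈ S, x j ≠ x m := fun j hj =>
        hinj j (Finset.mem_insert_of_mem hj) m (Finset.mem_insert_self m S)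
          (fun h => hm (h ▸ hj))
      have h1 : ∀ i ∈ S, (a i * (x i - y)⁻¹) * ∏ j ∈ (insert m S).erase i, (a j * (x j - x i)⁻¹)
          = a m * (x m - y)⁻¹ * ((a i * (x i - y)⁻¹) * ∏ j ∈ S.erase i, (a j * (x j - x i)⁻¹))
          - a m * (x m - y)⁻¹ * ((a i * (x i - x m)⁻¹) * ∏ j ∈ S.erase i, (a j * (x j - x i)⁻¹)) := by
        intro i hi
        have hne : m ≠ i := fun h => hm (h ▸ hi)
        rw [Finset.erase_insert_of_ne hne,
          Finset.prod_insert (fun h => hm (Finset.mem_of_mem_erase h))]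
        have hiy : x i - y ≠ 0 := sub_ne_zero.mpr (hy' i hi)
        have him : x i - x m ≠ 0 := sub_ne_zero.mpr (hym i hi)
        have hmi : x m - x i ≠ 0 := fun h => him (by linear_combination -h)
        have base : (x i - y)⁻¹ * (x m - x i)⁻¹
            = (x m - y)⁻¹ * (x i - y)⁻¹ - (x m - y)⁻¹ * (x i - x m)⁻¹ := by
          field_simp
          ring
        linear_combination (a i * a m * ∏ j ∈ S.erase i, (a j * (x j - x i)⁻¹)) * base
      rw [Finset.sum_insert hm, Finset.erase_insert hm, Finset.sum_congr rfl h1,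
        Finset.sum_sub_distrib, ← Finset.mul_sum, ← Finset.mul_sum,
        ih hinj' y hy' hS, ih hinj' (x m) hym hS, Finset.prod_insert hm]
      ring


lemma fold_pf (k : ℕ) (p a : Fin k → ℂ)
    (hp : ∀ i j : Fin k, i ≠ j → p i ^ 2 ≠ p j ^ 2)
    (mul : (Fin k → ℂ) →ₗ[ℂ] (Fin k → ℂ) →ₗ[ℂ] (Fin k → ℂ))
    (e : Fin k → Fin k → ℂ)
    (hmul : ∀ i j : Fin k, i ≠ j →
      mul (e i) (e j) =
        (a j / (p j ^ 2 - p i ^ 2)) • e i + (a i / (p i ^ 2 - p j ^ 2)) • e j) :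
    ∀ (L : List (Fin k)) (i₀ : Fin k), (i₀ :: L).Nodup →
    L.foldl (fun x i => mul x (e i)) (e i₀) =
      ∑ i ∈ (i₀ :: L).toFinset,
        (∏ j ∈ ((i₀ :: L).toFinset).erase i, a j / (p j ^ 2 - p i ^ 2)) • e i := by
  intro L
  induction L using List.reverseRecOn with
  | nil => intro i₀ _; simp
  | append_singleton L m ih =>
    intro i₀ hnd
    have hnd2 : ((i₀ :: L) ++ [m]).Nodup := hnd
    rw [List.nodup_append] at hnd2
    have hnd' : (i₀ :: L).Nodup := hnd2.1
    have hmT : m ∉ (i₀ :: L).toFinset := by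
      rw [List.mem_toFinset]
      intro h
      exact hnd2.2.2 m h m (by simp) rfl
    set T := (i₀ :: L).toFinset with hT
    have hTne : T.Nonempty := ⟨i₀, by simp [hT]⟩
    have hTnew : (i₀ :: (L ++ [m])).toFinset = insert m T := by
      simp only [hT, List.toFinset_cons, List.toFinset_append, List.toFinset_cons,
        List.toFinset_nil]
      ext x
      simp [or_comm, or_assoc, or_left_comm]
    rw [List.foldl_append, List.foldl_cons, List.foldl_nil, ih i₀ hnd', hTnew]
    rw [map_sum, LinearMap.sum_apply]
    have hstep : ∀ i ∈ T,
        (mul ((∏ j ∈ T.erase i, a j / (p j ^ 2 - p i ^ 2)) • e i)) (e m)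
        = ((∏ j ∈ T.erase i, a j / (p j ^ 2 - p i ^ 2)) * (a m / (p m ^ 2 - p i ^ 2))) • e i
          + ((∏ j ∈ T.erase i, a j / (p j ^ 2 - p i ^ 2)) * (a i / (p i ^ 2 - p m ^ 2))) • e m := by
      intro i hi
      have hne : i ≠ m := fun h => hmT (h ▸ hi)
      rw [map_smul, LinearMap.smul_apply, hmul i m hne, smul_add, smul_smul, smul_smul]
    rw [Finset.sum_congr rfl hstep, Finset.sum_add_distrib, ← Finset.sum_smul,
      Finset.sum_insert hmT, Finset.erase_insert hmT, add_comm]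
    congr 1
    · -- coefficient of e m : key identity
      congr 1
      have hxinj : ∀ i ∈ T, ∀ j ∈ T, i ≠ j → p i ^ 2 ≠ p j ^ 2 := fun i _ j _ hij => hp i j hij
      have hym : ∀ j ∈ T, p j ^ 2 ≠ p m ^ 2 := fun j hj => hp j m (fun h => hmT (h ▸ hj))
      have := key_pf (fun i => p i ^ 2) a T hxinj (p m ^ 2) hym hTne
      simp only [div_eq_mul_inv]
      calc ∑ i ∈ T, (∏ j ∈ T.erase i, a j * (p j ^ 2 - p i ^ 2)⁻¹) * (a i * (p i ^ 2 - p m ^ 2)⁻¹)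
          = ∑ i ∈ T, (a i * (p i ^ 2 - p m ^ 2)⁻¹) * ∏ j ∈ T.erase i, a j * (p j ^ 2 - p i ^ 2)⁻¹ := by
            exact Finset.sum_congr rfl (fun i _ => mul_comm _ _)
        _ = ∏ j ∈ T, a j * (p j ^ 2 - p m ^ 2)⁻¹ := this
    · refine Finset.sum_congr rfl (fun i hi => ?_)
      congr 1
      have hne : m ≠ i := fun h => hmT (h ▸ hi)
      rw [Finset.erase_insert_of_ne hne,
        Finset.prod_insert (fun h => hmT (Finset.mem_of_mem_erase h)), mul_comm]

theorem stmt_13 (k : ℕ) (hk : 1 ≤ k) (p a : Fin k → ℂ)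
    (hp : ∀ i j : Fin k, i ≠ j → p i ^ 2 ≠ p j ^ 2)
    (mul : (Fin k → ℂ) →ₗ[ℂ] (Fin k → ℂ) →ₗ[ℂ] (Fin k → ℂ))
    (e : Fin k → Fin k → ℂ) (he : ∀ i, e i = Pi.single i 1)
    (hmul : ∀ i j : Fin k, i ≠ j →
      mul (e i) (e j) =
        (a j / (p j ^ 2 - p i ^ 2)) • e i + (a i / (p i ^ 2 - p j ^ 2)) • e j) :
    ((List.finRange k).tail).foldl (fun x i => mul x (e i)) (e ⟨0, hk⟩) =
      ∑ i : Fin k, (∏ j ∈ Finset.univ.erase i, a j / (p j ^ 2 - p i ^ 2)) • e i := by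
  obtain ⟨n, rfl⟩ : ∃ n, k = n + 1 := ⟨k - 1, (Nat.succ_pred_eq_of_pos hk).symm⟩
  have hcons : (⟨0, hk⟩ : Fin (n + 1)) :: (List.finRange (n + 1)).tail
      = List.finRange (n + 1) := by
    rw [List.finRange_succ, Fin.mk_zero]
    rfl
  have hnd : ((⟨0, hk⟩ : Fin (n + 1)) :: (List.finRange (n + 1)).tail).Nodup := by
    rw [hcons]; exact List.nodup_finRange _
  rw [fold_pf (n + 1) p a hp mul e hmul _ _ hnd, hcons, List.toFinset_finRange]
end

section
/- Let p₁, p₂, p₃, a₁, a₂, a₃ ∈ ℂ with p₁², p₂², p₃² pairwise distinct. Let * be any ℂ-bilinear product on ℂ³ with e_i * e_j = (a_j/(p_j² − p_i²))·e_i + (a_i/(p_i² − p_j²))·e_j for all i ≠ j, and let B be any ℂ-bilinear form on ℂ³ with B(e_i, e_j) = a_j/(p_j² − p_i²) + a_i/(p_i² − p_j²) for all i ≠ j. Then B(e₁ * e₂, e₃) = B(e₁, e₂ * e₃), and both equal a₂a₃/((p₂² − p₁²)(p₃² − p₁²)) + a₁a₃/((p₁² − p₂²)(p₃² − p₂²))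 + a₁a₂/((p₁² − p₃²)(p₂² − p₃²)). -/
theorem stmt_14 (p a : Fin 3 → ℂ)
    (hp : ∀ i j : Fin 3, i ≠ j → p i ^ 2 ≠ p j ^ 2)
    (mul : (Fin 3 → ℂ) →ₗ[ℂ] (Fin 3 → ℂ) →ₗ[ℂ] (Fin 3 → ℂ))
    (B : (Fin 3 → ℂ) →ₗ[ℂ] (Fin 3 → ℂ) →ₗ[ℂ] ℂ)
    (e : Fin 3 → Fin 3 → ℂ) (he : ∀ i, e i = Pi.single i 1)
    (hmul : ∀ i j : Fin 3, i ≠ j →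
      mul (e i) (e j) =
        (a j / (p j ^ 2 - p i ^ 2)) • e i + (a i / (p i ^ 2 - p j ^ 2)) • e j)
    (hB : ∀ i j : Fin 3, i ≠ j →
      B (e i) (e j) = a j / (p j ^ 2 - p i ^ 2) + a i / (p i ^ 2 - p j ^ 2)) :
    B (mul (e 0) (e 1)) (e 2) = B (e 0) (mul (e 1) (e 2)) ∧
    B (mul (e 0) (e 1)) (e 2) =
      a 1 * a 2 / ((p 1 ^ 2 - p 0 ^ 2) * (p 2 ^ 2 - p 0 ^ 2)) +
      a 0 * a 2 / ((p 0 ^ 2 - p 1 ^ 2) * (p 2 ^ 2 - p 1 ^ 2)) +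
      a 0 * a 1 / ((p 0 ^ 2 - p 2 ^ 2) * (p 1 ^ 2 - p 2 ^ 2)) := by
  have h01 : p 0 ^ 2 - p 1 ^ 2 ≠ 0 := sub_ne_zero.mpr (hp 0 1 (by decide))
  have h10 : p 1 ^ 2 - p 0 ^ 2 ≠ 0 := sub_ne_zero.mpr (hp 1 0 (by decide))
  have h02 : p 0 ^ 2 - p 2 ^ 2 ≠ 0 := sub_ne_zero.mpr (hp 0 2 (by decide))
  have h20 : p 2 ^ 2 - p 0 ^ 2 ≠ 0 := sub_ne_zero.mpr (hp 2 0 (by decide))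
  have h12 : p 1 ^ 2 - p 2 ^ 2 ≠ 0 := sub_ne_zero.mpr (hp 1 2 (by decide))
  have h21 : p 2 ^ 2 - p 1 ^ 2 ≠ 0 := sub_ne_zero.mpr (hp 2 1 (by decide))
  have hL : B (mul (e 0) (e 1)) (e 2) =
      (a 1 / (p 1 ^ 2 - p 0 ^ 2)) * B (e 0) (e 2) +
      (a 0 / (p 0 ^ 2 - p 1 ^ 2)) * B (e 1) (e 2) := by
    rw [hmul 0 1 (by decide)]
    simp [map_add, map_smul]
  have hR : B (e 0) (mul (e 1) (e 2)) =
      (a 2 / (p 2 ^ 2 - p 1 ^ 2)) * B (e 0) (e 1) +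
      (a 1 / (p 1 ^ 2 - p 2 ^ 2)) * B (e 0) (e 2) := by
    rw [hmul 1 2 (by decide)]
    simp [map_add, map_smul]
  rw [hL, hR, hB 0 2 (by decide), hB 1 2 (by decide), hB 0 1 (by decide)]
  constructor
  · field_simp
    ring
  · field_simp
    ring
end
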